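/- For every parameter θ = (μ, Σ, τ) with Σ symmetric positive definite and τ_i > 0 for all i, P_θ is the orthogonal projection onto T_θ with respect to the Fisher information metric: for every ξ ∈ E and every η ∈ T_θ, g_θ(ξ − P_θ(ξ), η) = 0. -/

import Mathlib

open Matrix

noncomputable section

abbrev E (p n : ℕ) : Type := (Fin p → ℝ) × Matrix (Fin p) (Fin p) ℝ × (Fin n → ℝ)

/-- Fisher information form at a parameter with scatter matrix `S` and textures `τ`. -/
def g (p n : ℕ) (S : Matrix (Fin p) (Fin p) ℝ) (τ : Fin n → ℝ) (ξ η : E p n) : ℝ :=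
  (∑ i, (τ i)⁻¹) * (ξ.1 ⬝ᵥ (S⁻¹ *ᵥ η.1))
    + (n / 2 : ℝ) * (S⁻¹ * ξ.2.1ᵀ * S⁻¹ * η.2.1).trace
    + (p / 2 : ℝ) * ∑ i, ξ.2.2 i * η.2.2 i / τ i ^ 2

/-- Tangent space at a parameter with textures `τ`. -/
def Tan (p n : ℕ) (τ : Fin n → ℝ) : Set (E p n) :=
  {ξ | ξ.2.1.IsSymm ∧ ∑ i, ξ.2.2 i / τ i = 0}

/-- Projection onto the tangent space. -/
def Pr (p n : ℕ) (τ : Fin n → ℝ) (ξ : E p n) : E p n :=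
  (ξ.1, (1 / 2 : ℝ) • (ξ.2.1 + ξ.2.1ᵀ), ξ.2.2 - ((∑ i, ξ.2.2 i / τ i) / n) • τ)

/-- Christoffel term. -/
def Gam (p n : ℕ) (S : Matrix (Fin p) (Fin p) ℝ) (τ : Fin n → ℝ) (ξ η : E p n) : E p n :=
  ((-(1 / 2) : ℝ) • (((∑ i, ξ.2.2 i / τ i ^ 2) / ∑ i, (τ i)⁻¹) • η.1
      + ((ξ.2.1 * S⁻¹) *ᵥ η.1)
      + ((∑ i, η.2.2 i / τ i ^ 2) / ∑ i, (τ i)⁻¹) • ξ.1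
      + ((η.2.1 * S⁻¹) *ᵥ ξ.1)),
    ((∑ i, (τ i)⁻¹) / n) • vecMulVec η.1 ξ.1 - ξ.2.1 * S⁻¹ * η.2.1,
    fun i => (1 / p : ℝ) * (ξ.1 ⬝ᵥ (S⁻¹ *ᵥ η.1)) - ξ.2.2 i * η.2.2 i / τ i)

/-- the residual of the projection is orthogonal to the tangent space
with respect to the Fisher information metric. -/
theorem stmt6 (p n : ℕ) (hp : 1 ≤ p) (hn : 1 ≤ n)
    (μ : Fin p → ℝ) (S : Matrix (Fin p) (Fin p) ℝ) (τ : Fin n → ℝ)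
    (hS : S.PosDef) (hτ : ∀ i, 0 < τ i) :
    ∀ ξ : E p n, ∀ η ∈ Tan p n τ, g p n S τ (ξ - Pr p n τ ξ) η = 0 := by
  rintro ξ η ⟨hη, hsum⟩
  have hτ0 : ∀ i, τ i ≠ 0 := fun i => (hτ i).ne'
  have hSinv : S⁻¹ᵀ = S⁻¹ := by
    rw [Matrix.transpose_nonsing_inv]
    congr 1
    simpa using hS.1.eq
  set A : Matrix (Fin p) (Fin p) ℝ := ξ.2.1 - (1 / 2 : ℝ) • (ξ.2.1 + ξ.2.1ᵀ) with hA
  have hAT : Aᵀ = -A := by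
    ext i j
    simp [hA, Matrix.sub_apply, Matrix.add_apply, Matrix.smul_apply, Matrix.neg_apply,
      Matrix.transpose_apply]
    ring
  have h1 : (ξ - Pr p n τ ξ).1 = 0 := by simp [Pr]
  have h2 : (ξ - Pr p n τ ξ).2.1 = A := rfl
  have h3 : (ξ - Pr p n τ ξ).2.2 = ((∑ i, ξ.2.2 i / τ i) / n) • τ := by
    simp [Pr]
  have tr0 : (S⁻¹ * Aᵀ * S⁻¹ * η.2.1).trace = 0 := by
    have e2 : (S⁻¹ * A * S⁻¹ * η.2.1)ᵀ = -(η.2.1 * (S⁻¹ * A * S⁻¹)) := by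
      rw [Matrix.transpose_mul, Matrix.transpose_mul, Matrix.transpose_mul, hSinv, hAT, hη.eq]
      noncomm_ring
    have key : (S⁻¹ * A * S⁻¹ * η.2.1).trace = -(S⁻¹ * A * S⁻¹ * η.2.1).trace := by
      conv_lhs => rw [← Matrix.trace_transpose, e2]
      rw [Matrix.trace_neg, Matrix.trace_mul_comm]
    have hz : (S⁻¹ * A * S⁻¹ * η.2.1).trace = 0 := by linarith
    have e3 : S⁻¹ * Aᵀ * S⁻¹ * η.2.1 = -(S⁻¹ * A * S⁻¹ * η.2.1) := by
      rw [hAT]; noncomm_ring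
    rw [e3, Matrix.trace_neg, hz, neg_zero]
  rw [g, h1, h2, h3, tr0]
  have sum0 : (∑ i, (((∑ i, ξ.2.2 i / τ i) / n) • τ) i * η.2.2 i / τ i ^ 2)
      = ((∑ i, ξ.2.2 i / τ i) / n) * ∑ i, η.2.2 i / τ i := by
    rw [Finset.mul_sum]
    refine Finset.sum_congr rfl fun i _ => ?_
    have := hτ0 i
    have hn0 : (n : ℝ) ≠ 0 := Nat.cast_ne_zero.mpr (by omega)
    simp only [Pi.smul_apply, smul_eq_mul]
    field_simp
  rw [sum0, hsum]
  simp
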